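/- For every l ≥ 4, f_{D_l}(t) = (-1)^l · f_{D_l}(1-t) as polynomials in ℚ[t], where f_{D_l}(t) = Σ_{k=0}^{l} (-1)^k (C(l,k)·C(l+k-1,k) + C(l-2,k-2)·C(l+k-2,k))·t^k. -/

import Mathlib

open Polynomial Finset

noncomputable def fD (l : ℕ) : Polynomial ℚ :=
  ∑ k ∈ Finset.range (l + 1),
    Polynomial.C ((-1 : ℚ) ^ k *
      ((l.choose k * (l + k - 1).choose k
        + if 2 ≤ k then (l - 2).choose (k - 2) * (l + k - 2).choose k else 0 : ℕ) : ℚ)) *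
      Polynomial.X ^ k

lemma lemA (r : ℕ) : ∀ (p q : ℕ),
    ∑ m ∈ Finset.range (p+1), (-1:ℚ)^m * (p.choose m : ℚ) * ((q+m).choose r : ℚ)
      = (-1:ℚ)^p * (if p ≤ r then ((q.choose (r-p) : ℕ) : ℚ) else 0) := by
  intro p
  induction p with
  | zero => intro q; simp
  | succ p ih =>
    intro q
    have hzero : (-1:ℚ)^(p+1) * (p.choose (p+1) : ℚ) * ((q+(p+1)).choose r : ℚ) = 0 := by
      simp [Nat.choose_succ_self]
    have hT : (∑ i ∈ Finset.range (p+1),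
          (-1:ℚ)^(i+1) * (p.choose (i+1) : ℚ) * ((q+(i+1)).choose r : ℚ))
        = (∑ m ∈ Finset.range (p+1), (-1:ℚ)^m * (p.choose m : ℚ) * ((q+m).choose r : ℚ))
          - (q.choose r : ℚ) := by
      have h1 := Finset.sum_range_succ'
        (fun m => (-1:ℚ)^m * (p.choose m : ℚ) * ((q+m).choose r : ℚ)) (p+1)
      have h2 := Finset.sum_range_succ
        (fun m => (-1:ℚ)^m * (p.choose m : ℚ) * ((q+m).choose r : ℚ)) (p+1)
      rw [h1] at h2
      simp only [hzero, add_zero, pow_zero, Nat.choose_zero_right, Nat.cast_one, one_mul,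
        Nat.add_zero] at h2
      linarith [h2]
    have hrec : ∑ m ∈ Finset.range (p+1+1), (-1:ℚ)^m * ((p+1).choose m : ℚ) * ((q+m).choose r : ℚ)
        = (∑ m ∈ Finset.range (p+1), (-1:ℚ)^m * (p.choose m : ℚ) * ((q+m).choose r : ℚ))
          - ∑ m ∈ Finset.range (p+1), (-1:ℚ)^m * (p.choose m : ℚ) * (((q+1)+m).choose r : ℚ) := by
      rw [Finset.sum_range_succ'
        (fun m => (-1:ℚ)^m * ((p+1).choose m : ℚ) * ((q+m).choose r : ℚ)) (p+1)]
      have e1 : ∀ i ∈ Finset.range (p+1),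
          (-1:ℚ)^(i+1) * ((p+1).choose (i+1) : ℚ) * ((q+(i+1)).choose r : ℚ)
          = (-((-1:ℚ)^i * (p.choose i : ℚ) * (((q+1)+i).choose r : ℚ)))
            + (-1:ℚ)^(i+1) * (p.choose (i+1) : ℚ) * ((q+(i+1)).choose r : ℚ) := by
        intro i _
        rw [Nat.choose_succ_succ']
        rw [show q + (i+1) = (q+1) + i from by omega]
        push_cast
        ring
      rw [Finset.sum_congr rfl e1, Finset.sum_add_distrib, Finset.sum_neg_distrib, hT]
      simp
      ring
    rw [hrec, ih q, ih (q+1)]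
    by_cases h1 : p + 1 ≤ r
    · have h2 : p ≤ r := by omega
      simp only [if_pos h1, if_pos h2]
      have hp : r - p = (r - (p+1)) + 1 := by omega
      have pascal : (q+1).choose ((r-(p+1))+1)
          = q.choose (r-(p+1)) + q.choose ((r-(p+1))+1) := Nat.choose_succ_succ' q (r-(p+1))
      rw [hp, pascal]
      push_cast
      ring
    · by_cases h2 : p ≤ r
      · have hpr : p = r := by omega
        subst hpr
        simp only [if_pos le_rfl, if_neg h1, Nat.sub_self]
        simp
      · simp only [if_neg h1, if_neg h2]
        ring

lemma legCoeff (n j : ℕ) :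
    ∑ k ∈ Finset.range (n+1),
        (-1:ℚ)^k * (n.choose k : ℚ) * ((n+k).choose k : ℚ) * (k.choose j : ℚ)
      = (-1:ℚ)^n * (n.choose j : ℚ) * ((n+j).choose j : ℚ) := by
  by_cases hj : j ≤ n
  · have hz : ∀ k ∈ Finset.Ico 0 j,
        (-1:ℚ)^k * (n.choose k : ℚ) * ((n+k).choose k : ℚ) * (k.choose j : ℚ) = 0 := by
      intro k hk
      have : k < j := (Finset.mem_Ico.mp hk).2
      simp [Nat.choose_eq_zero_of_lt this]
    have key := Finset.sum_Ico_eq_sum_range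
      (f := fun k => (-1:ℚ)^k * (n.choose k : ℚ) * ((n+k).choose k : ℚ) * (k.choose j : ℚ))
      (m := j) (n := n+1)
    have hsplit : ∑ k ∈ Finset.range (n+1),
        (-1:ℚ)^k * (n.choose k : ℚ) * ((n+k).choose k : ℚ) * (k.choose j : ℚ)
        = ∑ i ∈ Finset.range (n + 1 - j),
          (-1:ℚ)^(j+i) * (n.choose (j+i) : ℚ) * ((n+(j+i)).choose (j+i) : ℚ)
            * ((j+i).choose j : ℚ) := by
      rw [← key, Finset.range_eq_Ico,
        ← Finset.sum_Ico_consecutive _ (Nat.zero_le j) (by omega : j ≤ n+1),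
        Finset.sum_eq_zero hz, zero_add]
    rw [hsplit, show n + 1 - j = n - j + 1 from by omega]
    have e : ∀ i ∈ Finset.range (n-j+1),
        (-1:ℚ)^(j+i) * (n.choose (j+i) : ℚ) * ((n+(j+i)).choose (j+i) : ℚ)
          * ((j+i).choose j : ℚ)
        = ((-1:ℚ)^j * (n.choose j : ℚ))
          * ((-1:ℚ)^i * ((n-j).choose i : ℚ) * (((n+j)+i).choose n : ℚ)) := by
      intro i hi
      have hi' : i ≤ n - j := by
        have := Finset.mem_range.mp hi; omega
      have t1 : n.choose (j+i) * ((j+i).choose j) = n.choose j * (n-j).choose i := by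
        have h := Nat.choose_mul (n := n) (Nat.le_add_right j i)
        simpa using h
      have t2 : (n+(j+i)).choose (j+i) = ((n+j)+i).choose n := by
        rw [show n+(j+i) = (n+j)+i from by omega]
        rw [← Nat.choose_symm (show n ≤ (n+j)+i by omega)]
        congr 1
        omega
      have t1q : (n.choose (j+i) : ℚ) * ((j+i).choose j : ℚ)
          = (n.choose j : ℚ) * ((n-j).choose i : ℚ) := by exact_mod_cast t1
      rw [t2, pow_add]
      linear_combination ((-1:ℚ)^j * (-1:ℚ)^i * ((((n+j)+i).choose n : ℕ) : ℚ)) * t1q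
    rw [Finset.sum_congr rfl e, ← Finset.mul_sum, lemA n (n-j) (n+j)]
    rw [if_pos (by omega : n - j ≤ n)]
    rw [show n - (n - j) = j from by omega]
    have hp : (-1:ℚ)^j * (-1:ℚ)^(n-j) = (-1:ℚ)^n := by
      rw [← pow_add]
      congr 1
      omega
    linear_combination ((n.choose j : ℚ) * (((n+j).choose j : ℕ) : ℚ)) * hp
  · have hz : ∀ k ∈ Finset.range (n+1),
        (-1:ℚ)^k * (n.choose k : ℚ) * ((n+k).choose k : ℚ) * (k.choose j : ℚ) = 0 := by
      intro k hk
      have : k < j := by have := Finset.mem_range.mp hk; omega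
      simp [Nat.choose_eq_zero_of_lt this]
    rw [Finset.sum_eq_zero hz]
    simp [Nat.choose_eq_zero_of_lt (by omega : n < j)]

noncomputable def gP (n : ℕ) : Polynomial ℚ :=
  ∑ k ∈ Finset.range (n+1),
    Polynomial.C ((-1:ℚ)^k * ((n.choose k * (n+k).choose k : ℕ) : ℚ)) * Polynomial.X ^ k

lemma hbin (k : ℕ) : ((1:Polynomial ℚ) - Polynomial.X)^k
    = ∑ j ∈ Finset.range (k+1),
        Polynomial.C ((-1:ℚ)^j * (k.choose j : ℚ)) * Polynomial.X ^ j := by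
  rw [sub_eq_neg_add, add_pow]
  refine Finset.sum_congr rfl fun j hj => ?_
  rw [one_pow, mul_one, neg_pow]
  rw [map_mul, map_pow, map_neg, map_one, Polynomial.C_eq_natCast]
  ring

lemma gP_comp (n : ℕ) :
    (gP n).comp (1 - Polynomial.X) = Polynomial.C ((-1:ℚ)^n) * gP n := by
  have expand : (gP n).comp (1 - Polynomial.X)
      = ∑ k ∈ Finset.range (n+1),
          Polynomial.C ((-1:ℚ)^k * ((n.choose k * (n+k).choose k : ℕ) : ℚ))
            * (1 - Polynomial.X)^k := by
    unfold gP
    simp [Polynomial.comp, Polynomial.eval₂_finset_sum, Polynomial.eval₂_pow, Polynomial.eval₂_neg, Polynomial.eval₂_one]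
  rw [expand]
  have hext : ∀ k ∈ Finset.range (n+1),
      Polynomial.C ((-1:ℚ)^k * ((n.choose k * (n+k).choose k : ℕ) : ℚ)) * (1 - Polynomial.X)^k
      = ∑ j ∈ Finset.range (n+1),
          Polynomial.C ((-1:ℚ)^k * ((n.choose k * (n+k).choose k : ℕ) : ℚ)
            * ((-1:ℚ)^j * (k.choose j : ℚ))) * Polynomial.X ^ j := by
    intro k hk
    have hkn : k + 1 ≤ n + 1 := by
      have := Finset.mem_range.mp hk; omega
    rw [hbin k, Finset.mul_sum]
    rw [Finset.sum_subset (Finset.range_subset_range.mpr hkn)]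
    · exact Finset.sum_congr rfl fun j hj => by rw [← mul_assoc, ← Polynomial.C_mul]
    · intro j hjmem hjnot
      have : k < j := by
        simp only [Finset.mem_range, not_lt] at hjnot
        omega
      simp [Nat.choose_eq_zero_of_lt this]
  rw [Finset.sum_congr rfl hext, Finset.sum_comm]
  unfold gP
  rw [Finset.mul_sum]
  refine Finset.sum_congr rfl fun j hj => ?_
  rw [← Finset.sum_mul, ← map_sum, ← mul_assoc, ← Polynomial.C_mul]
  congr 1
  have hs : ∑ k ∈ Finset.range (n+1),
      (-1:ℚ)^k * ((n.choose k * (n+k).choose k : ℕ) : ℚ) * ((-1:ℚ)^j * (k.choose j : ℚ))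
      = (-1:ℚ)^j * ∑ k ∈ Finset.range (n+1),
          (-1:ℚ)^k * (n.choose k : ℚ) * ((n+k).choose k : ℚ) * (k.choose j : ℚ) := by
    rw [Finset.mul_sum]
    refine Finset.sum_congr rfl fun k _ => ?_
    push_cast
    ring
  rw [hs, legCoeff n j]
  push_cast
  ring

lemma hcomb (l k : ℕ) (hl : 4 ≤ l) (hk : k ≤ l) :
    (4*(l:ℚ)-2) * ((l.choose k : ℚ) * ((l+k-1).choose k : ℚ)
        + (if 2 ≤ k then ((l-2).choose (k-2) : ℚ) * ((l+k-2).choose k : ℚ) else 0))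
      = (l:ℚ) * (((l-2).choose k : ℚ) * ((l+k-2).choose k : ℚ))
        + (3*(l:ℚ)-2) * ((l.choose k : ℚ) * ((l+k).choose k : ℚ)) := by
  set x : ℚ := (l : ℚ) with hxdef
  set y : ℚ := (k : ℚ) with hydef
  have hx4 : (4:ℚ) ≤ x := by rw [hxdef]; exact_mod_cast hl
  have hy0 : (0:ℚ) ≤ y := by rw [hydef]; positivity
  have hyx : y ≤ x := by rw [hxdef, hydef]; exact_mod_cast hk
  set A : ℚ := (l.choose k : ℚ) with hA
  set B : ℚ := ((l+k-1).choose k : ℚ) with hB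
  set E : ℚ := ((l+k-2).choose k : ℚ) with hE
  set F : ℚ := ((l-2).choose k : ℚ) with hF
  set G : ℚ := ((l+k).choose k : ℚ) with hG
  set D : ℚ := ((l-2).choose (k-2) : ℚ) with hD
  set I : ℚ := (if 2 ≤ k then D * E else 0) with hI
  -- cast equalities for nat subtractions
  have c1 : ((l + k - 1 : ℕ) : ℚ) = x + y - 1 := by
    rw [Nat.cast_sub (by omega : 1 ≤ l + k)]; push_cast; ring
  have c2 : ((l - 1 : ℕ) : ℚ) = x - 1 := by
    rw [Nat.cast_sub (by omega : 1 ≤ l)]; push_cast; ring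
  -- h1
  have h1 : x * G = (x + y) * B := by
    have n1 := Nat.choose_mul_succ_eq (l+k-1) k
    rw [show l+k-1+1 = l+k from by omega, show l+k-k = l from by omega] at n1
    have : (((l+k-1).choose k : ℕ) : ℚ) * ((l+k : ℕ) : ℚ) = (((l+k).choose k : ℕ) : ℚ) * ((l:ℕ):ℚ) := by
      exact_mod_cast congrArg (Nat.cast : ℕ → ℚ) n1
    push_cast at this
    rw [← hB, ← hG] at this
    linarith [this]
  -- h2
  have h2 : E * (x + y - 1) = B * (x - 1) := by
    have n2 := Nat.choose_mul_succ_eq (l+k-2) k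
    rw [show l+k-2+1 = l+k-1 from by omega, show l+k-1-k = l-1 from by omega] at n2
    have := congrArg (Nat.cast : ℕ → ℚ) n2
    push_cast at this
    rw [← hE, ← hB, c1, c2] at this
    linarith [this]
  -- h4
  have h4 : A * (x - y) * (x - y - 1) = x * (x - 1) * F := by
    by_cases hkl : k ≤ l - 2
    · have n4a := Nat.choose_mul_succ_eq (l-1) k
      rw [show l-1+1 = l from by omega] at n4a
      -- n4a : (l-1).choose k * l = l.choose k * (l - k)
      have n4b := Nat.choose_mul_succ_eq (l-2) k
      rw [show l-2+1 = l-1 from by omega] at n4b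
      -- n4b : (l-2).choose k * (l-1) = (l-1).choose k * (l-1-k)
      have q4a := congrArg (Nat.cast : ℕ → ℚ) n4a
      have q4b := congrArg (Nat.cast : ℕ → ℚ) n4b
      push_cast at q4a q4b
      rw [← hA, Nat.cast_sub (by omega : k ≤ l), ← hxdef, ← hydef] at q4a
      rw [← hF, Nat.cast_sub (by omega : k ≤ l - 1), c2, ← hydef] at q4b
      -- q4a : Bm * x = A * (x - y) ; q4b : F * (x-1) = Bm * ((x-1) - y)
      linear_combination (y + 1 - x) * q4a - x * q4b
    · have hknear : k = l - 1 ∨ k = l := by omega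
      have hF0 : F = 0 := by
        rw [hF]
        simp [Nat.choose_eq_zero_of_lt (show l - 2 < k by omega)]
      rcases hknear with h | h
      · have : y = x - 1 := by
          rw [hydef, hxdef, h, Nat.cast_sub (by omega : 1 ≤ l)]
          push_cast; ring
        rw [hF0, this]; ring
      · have : y = x := by rw [hydef, hxdef, h]
        rw [hF0, this]; ring
  -- h5
  have h5 : x * (x-1) * (x+y-1) * I = y * (y-1) * (x-1) * A * B := by
    by_cases hk2 : 2 ≤ k
    · obtain ⟨j, rfl⟩ : ∃ j, k = j + 2 := ⟨k - 2, by omega⟩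
      rw [hI, if_pos hk2]
      have n3a := Nat.add_one_mul_choose_eq (l-2) j
      rw [show l-2+1 = l-1 from by omega] at n3a
      -- n3a : (l-1) * (l-2).choose j = (l-1).choose (j+1) * (j+1)
      have n3b := Nat.add_one_mul_choose_eq (l-1) (j+1)
      rw [show l-1+1 = l from by omega] at n3b
      -- n3b : l * (l-1).choose (j+1) = l.choose (j+2) * (j+2)
      have hD' : D = ((l-2).choose j : ℚ) := by
        rw [hD, show j+2-2 = j from by omega]
      have q3a := congrArg (Nat.cast : ℕ → ℚ) n3a
      have q3b := congrArg (Nat.cast : ℕ → ℚ) n3b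
      push_cast at q3a q3b
      rw [c2, ← hD'] at q3a
      rw [← hA, ← hxdef] at q3b
      -- q3a : (x-1) * D = Bm * (j+1) ; q3b : x * Bm = A * (j+2)
      have hyj : y = (j:ℚ) + 2 := by rw [hydef]; push_cast; ring
      have r3 : x * (x-1) * D = A * y * (y-1) := by
        rw [hyj]
        linear_combination x * q3a + ((j:ℚ)+1) * q3b
      linear_combination (x+y-1) * E * r3 + A * y * (y-1) * h2
    · rw [hI, if_neg hk2]
      interval_cases k
      · have : y = 0 := by rw [hydef]; norm_num
        rw [this]; ring
      · have : y = 1 := by rw [hydef]; norm_num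
        rw [this]; ring
  -- final assembly
  have hx0 : x ≠ 0 := by linarith
  have hx1 : x - 1 ≠ 0 := by linarith
  have hxy1 : x + y - 1 ≠ 0 := by linarith
  have hμ : x * (x-1) * (x+y-1) ≠ 0 := by
    apply mul_ne_zero (mul_ne_zero hx0 hx1) hxy1
  apply mul_left_cancel₀ hμ
  linear_combination (4*x-2) * h5 + x*(x+y-1)*E * h4 - x*A*(x-y)*(x-y-1) * h2
    - (3*x-2)*(x-1)*(x+y-1)*A * h1

lemma gP_sub2 (l : ℕ) (hl : 4 ≤ l) :
    gP (l-2) = ∑ k ∈ Finset.range (l+1),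
      Polynomial.C ((-1:ℚ)^k * (((l-2).choose k * (l+k-2).choose k : ℕ) : ℚ))
        * Polynomial.X ^ k := by
  unfold gP
  rw [show l-2+1 = l-1 from by omega]
  have e : ∀ k ∈ Finset.range (l-1),
      Polynomial.C ((-1:ℚ)^k * (((l-2).choose k * ((l-2)+k).choose k : ℕ) : ℚ))
        * Polynomial.X ^ k
      = Polynomial.C ((-1:ℚ)^k * (((l-2).choose k * (l+k-2).choose k : ℕ) : ℚ))
        * Polynomial.X ^ k := by
    intro k _
    rw [show (l-2)+k = l+k-2 from by omega]
  rw [Finset.sum_congr rfl e]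
  apply Finset.sum_subset (Finset.range_subset_range.mpr (by omega : l-1 ≤ l+1))
  intro k _ hk
  have : l - 2 < k := by
    simp only [Finset.mem_range, not_lt] at hk
    omega
  simp [Nat.choose_eq_zero_of_lt this]

theorem fD_symmetry (l : ℕ) (hl : 4 ≤ l) :
    fD l = Polynomial.C ((-1 : ℚ) ^ l) * (fD l).comp (1 - Polynomial.X) := by
  have hmul : Polynomial.C (4*(l:ℚ)-2) * fD l
      = Polynomial.C ((l:ℚ)) * gP (l-2) + Polynomial.C (3*(l:ℚ)-2) * gP l := by
    rw [gP_sub2 l hl]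
    unfold fD gP
    rw [Finset.mul_sum, Finset.mul_sum, Finset.mul_sum, ← Finset.sum_add_distrib]
    refine Finset.sum_congr rfl fun k hk => ?_
    have hk' : k ≤ l := by have := Finset.mem_range.mp hk; omega
    rw [← mul_assoc, ← mul_assoc, ← mul_assoc, ← Polynomial.C_mul, ← Polynomial.C_mul,
      ← Polynomial.C_mul, ← add_mul, ← Polynomial.C_add]
    congr 1
    congr 1
    have h := hcomb l k hl hk'
    push_cast [apply_ite (Nat.cast : ℕ → ℚ)]
    push_cast [apply_ite (Nat.cast : ℕ → ℚ)] at h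
    linear_combination ((-1:ℚ)^k) * h
  have hcomp := congrArg (fun p : Polynomial ℚ => p.comp (1 - Polynomial.X)) hmul
  simp only [Polynomial.mul_comp, Polynomial.add_comp, Polynomial.C_comp] at hcomp
  rw [gP_comp (l-2), gP_comp l] at hcomp
  have hpar : ((-1:ℚ))^(l-2) = (-1:ℚ)^l := by
    have h' : (-1:ℚ)^l = (-1:ℚ)^((l-2)+2) := by congr 1; omega
    rw [h', pow_add]
    norm_num
  rw [hpar] at hcomp
  have h2 : Polynomial.C (4*(l:ℚ)-2) * (fD l).comp (1 - Polynomial.X)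
      = Polynomial.C ((-1:ℚ)^l) * (Polynomial.C (4*(l:ℚ)-2) * fD l) := by
    rw [hcomp, hmul]
    ring
  have hC : Polynomial.C (4*(l:ℚ)-2) ≠ 0 := by
    simp only [ne_eq, Polynomial.C_eq_zero]
    have h4 : (4:ℚ) ≤ (l:ℚ) := by exact_mod_cast hl
    intro hh
    linarith
  apply mul_left_cancel₀ hC
  have hone : ((-1:ℚ)^l) * ((-1:ℚ)^l) = 1 := by
    rw [← pow_add]
    exact Even.neg_one_pow ⟨l, rfl⟩
  calc Polynomial.C (4*(l:ℚ)-2) * fD l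
      = (Polynomial.C ((-1:ℚ)^l) * Polynomial.C ((-1:ℚ)^l))
        * (Polynomial.C (4*(l:ℚ)-2) * fD l) := by
        rw [← Polynomial.C_mul, hone]
        simp
    _ = Polynomial.C ((-1:ℚ)^l)
        * (Polynomial.C ((-1:ℚ)^l) * (Polynomial.C (4*(l:ℚ)-2) * fD l)) := by ring
    _ = Polynomial.C ((-1:ℚ)^l)
        * (Polynomial.C (4*(l:ℚ)-2) * (fD l).comp (1 - Polynomial.X)) := by rw [← h2]
    _ = Polynomial.C (4*(l:ℚ)-2)
        * (Polynomial.C ((-1:ℚ)^l) * (fD l).comp (1 - Polynomial.X)) := by ring
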